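/- arXiv:2001.11440 — 4 statements merged into one kernel-verified Lean document; each statement's English description precedes it below -/
import Mathlib

section
/- Let Θ, α₀, α₁, β, γ be nonzero complex numbers satisfying: α₀²Θ² = 1; α₁²Θ² = Θ; γ²Θ² = (α₁βγ)²Θ³; β²Θ² = −(α₁γ)³Θ³; and (α₀α₁βγ)³ = α₁⁸. Then for every q ∈ ℂ with q² = γ one has α₁ = −q⁻⁶, β² = 1, α₀β = −α₁² = −q⁻¹²; in particular either (β, α₀) = (−1, q⁻¹²) or (β, α₀) = (1, −q⁻¹²). -/
/-- the numerical content of the eigenvalue computation for a ribbon category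
of type `G₂`: `Θ` is the twist of `V` and `α₀, α₁, β, γ` are the eigenvalues of the braiding
`c_{V,V}` on the summands `1, V, V_{Λ₂}, V_{2Λ₁}` of `V ⊗ V`. -/
theorem g2_eigenvalues (Θ α₀ α₁ β γ : ℂ)
    (hΘ : Θ ≠ 0) (hα₀ : α₀ ≠ 0) (hα₁ : α₁ ≠ 0) (hβ : β ≠ 0) (hγ : γ ≠ 0)
    (h1 : α₀ ^ 2 * Θ ^ 2 = 1)
    (h2 : α₁ ^ 2 * Θ ^ 2 = Θ)
    (h3 : γ ^ 2 * Θ ^ 2 = (α₁ * β * γ) ^ 2 * Θ ^ 3)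
    (h4 : β ^ 2 * Θ ^ 2 = -(α₁ * γ) ^ 3 * Θ ^ 3)
    (h5 : (α₀ * α₁ * β * γ) ^ 3 = α₁ ^ 8) :
    ∀ q : ℂ, q ^ 2 = γ →
      α₁ = -(q⁻¹) ^ 6 ∧ β ^ 2 = 1 ∧ α₀ * β = -α₁ ^ 2 ∧ α₀ * β = -(q⁻¹) ^ 12 ∧
        ((β = -1 ∧ α₀ = (q⁻¹) ^ 12) ∨ (β = 1 ∧ α₀ = -(q⁻¹) ^ 12)) := by
  intro q hq
  have hqne : q ≠ 0 := by
    intro h; apply hγ; rw [← hq, h]; ring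
  -- Step 1: cancel `Θ` in h2
  have e1 : α₁ ^ 2 * Θ = 1 :=
    mul_right_cancel₀ hΘ (show α₁ ^ 2 * Θ * Θ = 1 * Θ by linear_combination h2)
  -- Step 2: β ^ 2 = 1, by cancelling γ² Θ² in h3
  have hγΘ : γ ^ 2 * Θ ^ 2 ≠ 0 := mul_ne_zero (pow_ne_zero _ hγ) (pow_ne_zero _ hΘ)
  have e2 : β ^ 2 = 1 := by
    have := mul_right_cancel₀ hγΘ
      (show β ^ 2 * (γ ^ 2 * Θ ^ 2) = 1 * (γ ^ 2 * Θ ^ 2) by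
        linear_combination -h3 - β ^ 2 * γ ^ 2 * Θ ^ 2 * e1)
    exact this
  -- Step 3: α₁ * γ ^ 3 = -1, from h4
  have hΘ2 : Θ ^ 2 ≠ 0 := pow_ne_zero _ hΘ
  have e3 : α₁ * γ ^ 3 = -1 := by
    have := mul_right_cancel₀ hΘ2
      (show α₁ * γ ^ 3 * Θ ^ 2 = -1 * Θ ^ 2 by
        linear_combination h4 - Θ ^ 2 * e2 - α₁ * γ ^ 3 * Θ ^ 2 * e1)
    exact this
  -- Step 4: α₀ ^ 2 = α₁ ^ 4, from h1
  have e4 : α₀ ^ 2 = α₁ ^ 4 := by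
    have := mul_right_cancel₀ hΘ2
      (show α₀ ^ 2 * Θ ^ 2 = α₁ ^ 4 * Θ ^ 2 by
        linear_combination h1 - (α₁ ^ 2 * Θ + 1) * e1)
    exact this
  -- Step 5: α₀ * β = -α₁ ^ 2, from h5
  have hα₁6 : α₁ ^ 6 ≠ 0 := pow_ne_zero _ hα₁
  have e5 : α₀ * β = -α₁ ^ 2 := by
    have := mul_right_cancel₀ hα₁6
      (show α₀ * β * α₁ ^ 6 = -α₁ ^ 2 * α₁ ^ 6 by
        linear_combination -h5 + α₀ * α₁ ^ 3 * β ^ 3 * γ ^ 3 * e4 + α₀ * α₁ ^ 7 * β * γ ^ 3 * e2 + α₀ * β * α₁ ^ 6 * e3)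
    exact this
  -- α₁ in terms of q
  have hγq3 : γ ^ 3 = q ^ 6 := by rw [← hq]; ring
  have hα₁q : α₁ = -(q⁻¹) ^ 6 := by
    have h6 : q ^ 6 ≠ 0 := pow_ne_zero _ hqne
    field_simp
    linear_combination e3 - α₁ * hγq3
  have hα₁sq : -α₁ ^ 2 = -(q⁻¹) ^ 12 := by
    rw [hα₁q]; ring
  refine ⟨hα₁q, e2, e5, by rw [e5, hα₁sq], ?_⟩
  -- the disjunction
  have : (β - 1) * (β + 1) = 0 := by linear_combination e2
  rcases mul_eq_zero.mp this with h | h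
  · right
    have hb : β = 1 := by linear_combination h
    refine ⟨hb, ?_⟩
    have := e5; rw [hb, mul_one] at this
    rw [this, ← hα₁sq]
  · left
    have hb : β = -1 := by linear_combination h
    refine ⟨hb, ?_⟩
    have := e5; rw [hb] at this
    have : α₀ = α₁ ^ 2 := by linear_combination -this
    rw [this]
    have := hα₁sq
    linear_combination -hα₁sq
end

section
/- Let ρ : B₃ → GL₂(ℂ) be an irreducible 2-dimensional representation of the braid group B₃ such that ρ(σ₁) is diagonalizable with eigenvalues α₁, α₂ and such that ρ(Δ₃²) = z·I for a scalar z ∈ ℂ. Then z = −(α₁α₂)³. -/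
/-- The braid relations on `m` generators (standing for `σ_1,…,σ_m`). -/
def braidRels (m : ℕ) : Set (FreeGroup (Fin m)) :=
  { r | (∃ i j : Fin m, (i : ℕ) + 1 = (j : ℕ) ∧
          r = FreeGroup.of i * FreeGroup.of j * FreeGroup.of i *
              (FreeGroup.of j * FreeGroup.of i * FreeGroup.of j)⁻¹) ∨
        (∃ i j : Fin m, (i : ℕ) + 2 ≤ (j : ℕ) ∧
          r = FreeGroup.of i * FreeGroup.of j * (FreeGroup.of j * FreeGroup.of i)⁻¹) }

/-- Artin's braid group `B_n`, with generators `σ_1,…,σ_{n-1}`. -/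
def BraidGroup (n : ℕ) : Type := PresentedGroup (braidRels (n - 1))

instance (n : ℕ) : Group (BraidGroup n) := by unfold BraidGroup; infer_instance

/-- The generator `σ_{i+1}` of the braid group `B_n`, for `i : Fin (n-1)`. -/
def braidGen {n : ℕ} (i : Fin (n - 1)) : BraidGroup n := PresentedGroup.of i

/-- The central element `Δ_n² = (σ_1 σ_2 ⋯ σ_{n-1})^n` of `B_n`. -/
def deltaSq (n : ℕ) : BraidGroup n := ((List.ofFn (fun i : Fin (n-1) => braidGen i)).prod) ^ n

/-- Irreducibility of a matrix representation: the only invariant subspaces of `ℂ^m`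
are `⊥` and `⊤`. -/
def IsIrreducibleRep {G : Type*} [Group G] {m : ℕ}
    (ρ : G →* Matrix.GeneralLinearGroup (Fin m) ℂ) : Prop :=
  ∀ U : Submodule ℂ (Fin m → ℂ),
    (∀ g : G, ∀ x ∈ U, (ρ g : Matrix (Fin m) (Fin m) ℂ).mulVec x ∈ U) → U = ⊥ ∨ U = ⊤

lemma braid_rel3 : (braidGen 0 : BraidGroup 3) * braidGen 1 * braidGen 0
    = braidGen 1 * braidGen 0 * braidGen 1 := by
  have hmem : (FreeGroup.of (0 : Fin 2) * FreeGroup.of (1 : Fin 2) * FreeGroup.of 0 *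
      (FreeGroup.of (1 : Fin 2) * FreeGroup.of 0 * FreeGroup.of 1)⁻¹) ∈ braidRels 2 :=
    Or.inl ⟨0, 1, rfl, rfl⟩
  have h1 : PresentedGroup.mk (braidRels 2)
      (FreeGroup.of (0 : Fin 2) * FreeGroup.of 1 * FreeGroup.of 0 *
        (FreeGroup.of (1 : Fin 2) * FreeGroup.of 0 * FreeGroup.of 1)⁻¹) = 1 := by
    exact (QuotientGroup.eq_one_iff _).2 (Subgroup.subset_normalClosure hmem)
  simp only [map_mul, map_inv] at h1
  have := mul_inv_eq_one.mp h1
  exact this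

lemma deltaSq3 : deltaSq 3 = ((braidGen 0 : BraidGroup 3) * braidGen 1) ^ 3 := by
  show ((List.ofFn (fun i : Fin 2 => (braidGen i : BraidGroup 3))).prod) ^ 3 = _
  simp [List.ofFn_succ]

lemma ch2 (M : Matrix (Fin 2) (Fin 2) ℂ) :
    M * M - M.trace • M + M.det • (1 : Matrix (Fin 2) (Fin 2) ℂ) = 0 := by
  ext i j
  fin_cases i <;> fin_cases j <;>
    simp [Matrix.mul_apply, Fin.sum_univ_two, Matrix.trace_fin_two, Matrix.det_fin_two,
      Matrix.one_apply] <;> ring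

lemma det_diag2 (α₁ α₂ : ℂ) : (Matrix.diagonal ![α₁, α₂]).det = α₁ * α₂ := by
  simp [Matrix.det_diagonal, Fin.prod_univ_two]

example (u : Matrix.GeneralLinearGroup (Fin 2) ℂ) :
    (u : Matrix (Fin 2) (Fin 2) ℂ) * ((u⁻¹ : Matrix.GeneralLinearGroup (Fin 2) ℂ) :
      Matrix (Fin 2) (Fin 2) ℂ) = 1 := by
  rw [← Units.val_mul, mul_inv_cancel, Units.val_one]

example : (Matrix.diagonal ![α₁, α₂] : Matrix (Fin 2) (Fin 2) ℂ).mulVec ![1, 0]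
    = α₁ • ![1, 0] := by
  funext i; fin_cases i <;> simp [Matrix.mulVec, dotProduct, Fin.sum_univ_two]


lemma span_stable {v x : Fin 2 → ℂ} {M : Matrix (Fin 2) (Fin 2) ℂ}
    (h : M.mulVec v ∈ Submodule.span ℂ {v}) (hx : x ∈ Submodule.span ℂ {v}) :
    M.mulVec x ∈ Submodule.span ℂ {v} := by
  obtain ⟨c, rfl⟩ := Submodule.mem_span_singleton.1 hx
  rw [Matrix.mulVec_smul]
  exact Submodule.smul_mem _ _ h


/-- for an irreducible 2-dimensional representation of `B₃` with `ρ(σ₁)`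
diagonalizable with eigenvalues `α₁, α₂` and `ρ(Δ₃²) = z·I`, one has `z = -(α₁α₂)³`. -/
theorem braid3_scalar_dim2 (ρ : BraidGroup 3 →* Matrix.GeneralLinearGroup (Fin 2) ℂ)
    (hirr : IsIrreducibleRep ρ) (α₁ α₂ : ℂ)
    (hdiag : ∃ C : Matrix.GeneralLinearGroup (Fin 2) ℂ,
      (ρ (braidGen 0) : Matrix (Fin 2) (Fin 2) ℂ) =
        (C : Matrix (Fin 2) (Fin 2) ℂ) * Matrix.diagonal ![α₁, α₂] * (C⁻¹ : Matrix (Fin 2) (Fin 2) ℂ))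
    (z : ℂ)
    (hz : (ρ (deltaSq 3) : Matrix (Fin 2) (Fin 2) ℂ) = z • (1 : Matrix (Fin 2) (Fin 2) ℂ)) :
    z = -(α₁ * α₂) ^ 3 := by
  obtain ⟨C, hC⟩ := hdiag
  set a := ρ (braidGen 0) with ha
  set b := ρ (braidGen 1) with hb
  set A : Matrix (Fin 2) (Fin 2) ℂ := (a : Matrix (Fin 2) (Fin 2) ℂ) with hA
  set B : Matrix (Fin 2) (Fin 2) ℂ := (b : Matrix (Fin 2) (Fin 2) ℂ) with hB
  -- braid relation for matrices
  have hrel : A * B * A = B * A * B := by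
    have h := congrArg (fun g => ((ρ g : Matrix.GeneralLinearGroup (Fin 2) ℂ) :
      Matrix (Fin 2) (Fin 2) ℂ)) braid_rel3
    simpa [map_mul, Units.val_mul] using h
  -- the square relation
  have hAB3 : (A * B) ^ 3 = z • 1 := by
    have := hz
    rw [deltaSq3, map_pow, map_mul] at this
    simpa [Units.val_pow_eq_pow_val, Units.val_mul] using this
  have hsq : (A * B * A) * (A * B * A) = z • 1 :=
    calc (A * B * A) * (A * B * A) = (A * B * A) * (B * A * B) := by rw [hrel]
      _ = (A * B) ^ 3 := by rw [pow_succ, pow_succ, pow_one]; simp [mul_assoc]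
      _ = z • 1 := hAB3
  -- determinants
  have hCCinv : (C : Matrix (Fin 2) (Fin 2) ℂ) * ((C⁻¹ : Matrix.GeneralLinearGroup (Fin 2) ℂ) :
      Matrix (Fin 2) (Fin 2) ℂ) = 1 := by
    rw [← Units.val_mul, mul_inv_cancel, Units.val_one]
  have hCinvC : ((C⁻¹ : Matrix.GeneralLinearGroup (Fin 2) ℂ) : Matrix (Fin 2) (Fin 2) ℂ) *
      (C : Matrix (Fin 2) (Fin 2) ℂ) = 1 := by
    rw [← Units.val_mul, inv_mul_cancel, Units.val_one]
  have hdetA : A.det = α₁ * α₂ := by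
    have h1 : (C : Matrix (Fin 2) (Fin 2) ℂ).det *
        ((C : Matrix (Fin 2) (Fin 2) ℂ)⁻¹).det = 1 := by
      rw [← Matrix.det_mul, ← Matrix.coe_units_inv, hCCinv, Matrix.det_one]
    rw [hC, Matrix.det_mul, Matrix.det_mul, det_diag2]
    calc (C : Matrix (Fin 2) (Fin 2) ℂ).det * (α₁ * α₂) *
          ((C : Matrix (Fin 2) (Fin 2) ℂ)⁻¹).det
        = (α₁ * α₂) * ((C : Matrix (Fin 2) (Fin 2) ℂ).det *
          ((C : Matrix (Fin 2) (Fin 2) ℂ)⁻¹).det) := by ring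
      _ = α₁ * α₂ := by rw [h1, mul_one]
  have hdetAne : A.det ≠ 0 := by
    have h1 : A * ((a⁻¹ : Matrix.GeneralLinearGroup (Fin 2) ℂ) : Matrix (Fin 2) (Fin 2) ℂ) = 1 := by
      rw [← Units.val_mul, mul_inv_cancel, Units.val_one]
    intro h0
    have h2 := congrArg Matrix.det h1
    rw [Matrix.det_mul, h0, zero_mul, Matrix.det_one] at h2
    exact zero_ne_one h2
  have hdetBne : B.det ≠ 0 := by
    have h1 : B * ((b⁻¹ : Matrix.GeneralLinearGroup (Fin 2) ℂ) : Matrix (Fin 2) (Fin 2) ℂ) = 1 := by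
      rw [← Units.val_mul, mul_inv_cancel, Units.val_one]
    intro h0
    have h2 := congrArg Matrix.det h1
    rw [Matrix.det_mul, h0, zero_mul, Matrix.det_one] at h2
    exact zero_ne_one h2
  have hmulne : α₁ * α₂ ≠ 0 := hdetA ▸ hdetAne
  have hdetB : B.det = α₁ * α₂ := by
    have h := congrArg Matrix.det hrel
    simp only [Matrix.det_mul, hdetA] at h
    have h2 : (α₁ * α₂ - B.det) * ((α₁ * α₂) * B.det) = 0 := by linear_combination h
    rcases mul_eq_zero.mp h2 with h3 | h3
    · exact (sub_eq_zero.mp h3).symm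
    · exact absurd h3 (mul_ne_zero hmulne hdetBne)
  -- A = B leads to a contradiction with irreducibility
  have hCC' : (C : Matrix (Fin 2) (Fin 2) ℂ) * ((C : Matrix (Fin 2) (Fin 2) ℂ))⁻¹ = 1 := by
    rw [← Matrix.coe_units_inv]; exact hCCinv
  have hC'C : ((C : Matrix (Fin 2) (Fin 2) ℂ))⁻¹ * (C : Matrix (Fin 2) (Fin 2) ℂ) = 1 := by
    rw [← Matrix.coe_units_inv]; exact hCinvC
  have hABfalse : A = B → False := by
    intro hABeq
    have hab : a = b := Units.ext hABeq
    set v : Fin 2 → ℂ := (C : Matrix (Fin 2) (Fin 2) ℂ).mulVec ![1, 0] with hvdef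
    have hdiagv : (Matrix.diagonal ![α₁, α₂]).mulVec ![1, 0] = α₁ • ![1, 0] := by
      funext i; fin_cases i <;> simp [Matrix.mulVec, dotProduct, Fin.sum_univ_two]
    have hv : A.mulVec v = α₁ • v := by
      rw [hC, hvdef, Matrix.mulVec_mulVec, mul_assoc _ _ (C : Matrix (Fin 2) (Fin 2) ℂ), hC'C,
        mul_one, ← Matrix.mulVec_mulVec, hdiagv, Matrix.mulVec_smul]
    have hvne : v ≠ 0 := by
      intro h0
      have h1 := congrArg (fun w => ((C : Matrix (Fin 2) (Fin 2) ℂ))⁻¹.mulVec w) h0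
      simp only [hvdef, Matrix.mulVec_mulVec, hC'C, Matrix.one_mulVec, Matrix.mulVec_zero] at h1
      have h2 := congrFun h1 0
      simp at h2
    have hα₁ : α₁ ≠ 0 := fun h => hmulne (by rw [h, zero_mul])
    set A' : Matrix (Fin 2) (Fin 2) ℂ :=
      ((a⁻¹ : Matrix.GeneralLinearGroup (Fin 2) ℂ) : Matrix (Fin 2) (Fin 2) ℂ) with hA'def
    have hA'A : A' * A = 1 := by rw [hA'def, ← Units.val_mul, inv_mul_cancel, Units.val_one]
    have hv' : A'.mulVec v = α₁⁻¹ • v := by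
      calc A'.mulVec v = A'.mulVec (α₁⁻¹ • (α₁ • v)) := by
            rw [smul_smul, inv_mul_cancel₀ hα₁, one_smul]
        _ = α₁⁻¹ • A'.mulVec (A.mulVec v) := by rw [← hv, Matrix.mulVec_smul]
        _ = α₁⁻¹ • v := by rw [Matrix.mulVec_mulVec, hA'A, Matrix.one_mulVec]
    have hmemv : v ∈ Submodule.span ℂ {v} := Submodule.mem_span_singleton_self v
    have hvU : A.mulVec v ∈ Submodule.span ℂ {v} := by
      rw [hv]; exact Submodule.smul_mem _ _ hmemv
    have hv'U : A'.mulVec v ∈ Submodule.span ℂ {v} := by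
      rw [hv']; exact Submodule.smul_mem _ _ hmemv
    let H : Subgroup (BraidGroup 3) :=
      { carrier := {g | ((ρ g : Matrix.GeneralLinearGroup (Fin 2) ℂ) :
            Matrix (Fin 2) (Fin 2) ℂ).mulVec v ∈ Submodule.span ℂ {v} ∧
          ((ρ g⁻¹ : Matrix.GeneralLinearGroup (Fin 2) ℂ) :
            Matrix (Fin 2) (Fin 2) ℂ).mulVec v ∈ Submodule.span ℂ {v}}
        one_mem' := by
          constructor <;> simp only [inv_one, map_one, Units.val_one, Matrix.one_mulVec] <;>
            exact hmemv
        mul_mem' := by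
          rintro g h ⟨hg1, hg2⟩ ⟨hh1, hh2⟩
          constructor
          · have he : ((ρ (g * h) : Matrix.GeneralLinearGroup (Fin 2) ℂ) :
                Matrix (Fin 2) (Fin 2) ℂ) = (ρ g : Matrix (Fin 2) (Fin 2) ℂ) *
                  (ρ h : Matrix (Fin 2) (Fin 2) ℂ) := by
              rw [map_mul, Units.val_mul]
            rw [he, ← Matrix.mulVec_mulVec]
            exact span_stable hg1 hh1
          · have he : ((ρ (g * h)⁻¹ : Matrix.GeneralLinearGroup (Fin 2) ℂ) :
                Matrix (Fin 2) (Fin 2) ℂ) = (ρ h⁻¹ : Matrix (Fin 2) (Fin 2) ℂ) *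
                  (ρ g⁻¹ : Matrix (Fin 2) (Fin 2) ℂ) := by
              rw [mul_inv_rev, map_mul, Units.val_mul]
            rw [he, ← Matrix.mulVec_mulVec]
            exact span_stable hh2 hg2
        inv_mem' := by
          rintro g ⟨h1, h2⟩
          exact ⟨h2, by rw [inv_inv]; exact h1⟩ }
    have hgens : ∀ j : Fin 2, PresentedGroup.of (rels := braidRels 2) j ∈ H := by
      intro j
      fin_cases j
      · refine ⟨hvU, ?_⟩
        show ((ρ (braidGen 0)⁻¹ : Matrix.GeneralLinearGroup (Fin 2) ℂ) :
          Matrix (Fin 2) (Fin 2) ℂ).mulVec v ∈ _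
        rw [map_inv]
        exact hv'U
      · refine ⟨?_, ?_⟩
        · show ((ρ (braidGen 1) : Matrix.GeneralLinearGroup (Fin 2) ℂ) :
            Matrix (Fin 2) (Fin 2) ℂ).mulVec v ∈ _
          rw [← hb, ← hab]
          exact hvU
        · show ((ρ (braidGen 1)⁻¹ : Matrix.GeneralLinearGroup (Fin 2) ℂ) :
            Matrix (Fin 2) (Fin 2) ℂ).mulVec v ∈ _
          rw [map_inv, ← hb, ← hab]
          exact hv'U
    have key : ∀ g : BraidGroup 3, ((ρ g : Matrix.GeneralLinearGroup (Fin 2) ℂ) :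
        Matrix (Fin 2) (Fin 2) ℂ).mulVec v ∈ Submodule.span ℂ {v} := by
      intro g
      exact (PresentedGroup.generated_by (braidRels 2) H hgens g).1
    rcases hirr (Submodule.span ℂ {v}) (fun g x hx => span_stable (key g) hx) with hU | hU
    · rw [hU] at hmemv
      exact hvne (Submodule.mem_bot ℂ |>.mp hmemv)
    · have h1 : Module.finrank ℂ (Submodule.span ℂ {v}) = 1 := finrank_span_singleton hvne
      rw [hU, finrank_top] at h1
      simp at h1
  -- Cayley–Hamilton for P = A*B*A
  have hdetP : (A * B * A).det = (α₁ * α₂) ^ 3 := by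
    rw [Matrix.det_mul, Matrix.det_mul, hdetA, hdetB]; ring
  have hch := ch2 (A * B * A)
  rw [hsq, hdetP] at hch
  by_cases ht : (A * B * A).trace = 0
  · rw [ht, zero_smul, sub_zero] at hch
    have h1 : (z + (α₁ * α₂) ^ 3) • (1 : Matrix (Fin 2) (Fin 2) ℂ) = 0 := by
      rw [add_smul]; exact hch
    have h2 := congrFun (congrFun h1 0) 0
    simp [Matrix.one_apply] at h2
    linear_combination h2
  · exfalso
    have h1 : (A * B * A).trace • (A * B * A) = (z + (α₁ * α₂) ^ 3) • 1 := by
      have h2 : (z + (α₁ * α₂) ^ 3) • (1 : Matrix (Fin 2) (Fin 2) ℂ) -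
          (A * B * A).trace • (A * B * A) = 0 := by
        rw [add_smul, ← hch]; abel
      exact (sub_eq_zero.mp h2).symm
    set c : ℂ := (z + (α₁ * α₂) ^ 3) / (A * B * A).trace with hcdef
    have hP : A * B * A = c • 1 := by
      calc A * B * A = (A * B * A).trace⁻¹ • ((A * B * A).trace • (A * B * A)) := by
            rw [smul_smul, inv_mul_cancel₀ ht, one_smul]
        _ = c • 1 := by rw [h1, smul_smul, hcdef, div_eq_inv_mul]
    have hcne : c ≠ 0 := by
      intro h0
      rw [h0, zero_smul] at hP
      rw [hP, Matrix.det_zero] at hdetP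
      exact pow_ne_zero 3 hmulne hdetP.symm
    have hPA : (A * B * A) * A = B * (A * B * A) := by
      conv_lhs => rw [hrel]
      simp [mul_assoc]
    rw [hP, smul_mul_assoc, one_mul, mul_smul_comm, mul_one] at hPA
    exact hABfalse (smul_right_injective _ hcne hPA)
end

section
/- Let ρ : B₃ → GL₃(ℂ) be an irreducible 3-dimensional representation of the braid group B₃ such that ρ(σ₁) is diagonalizable with eigenvalues α₁, α₂, α₃ and such that ρ(Δ₃²) = z·I for a scalar z ∈ ℂ. Then z = (α₁α₂α₃)². -/
open Matrix Polynomial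

section aux

lemma trace_mulVecLin' (E : Matrix (Fin 3) (Fin 3) ℂ) :
    Matrix.trace E = LinearMap.trace ℂ (Fin 3 → ℂ) E.mulVecLin := by
  rw [LinearMap.trace_eq_matrix_trace ℂ (Pi.basisFun ℂ (Fin 3)), LinearMap.toMatrix_eq_toMatrix',
    ← Matrix.toLin'_apply', LinearMap.toMatrix'_toLin']

lemma core_invariant (A Q : Matrix (Fin 3) (Fin 3) ℂ) (lam mu : ℂ)
    (hlam : lam ≠ 0) (hne : lam ≠ mu)
    (hrel : A * Q * A = Q * Q)
    (hQ2 : (Q - lam • 1) * (Q - mu • 1) = 0)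
    (htr : Q.trace = 2 * lam + mu)
    (w : Fin 3 → ℂ) (hw : w ≠ 0) (hQw : Q.mulVec w = mu • w) :
    ∃ U : Submodule ℂ (Fin 3 → ℂ), U ≠ ⊥ ∧ U ≠ ⊤ ∧
      (∀ x ∈ U, A.mulVec x ∈ U) ∧ (∀ x ∈ U, Q.mulVec x ∈ U) := by
  have hml : mu - lam ≠ 0 := sub_ne_zero.2 (Ne.symm hne)
  set E : Matrix (Fin 3) (Fin 3) ℂ := (mu - lam)⁻¹ • (Q - lam • 1) with hE
  have expand : ∀ a b : ℂ, (Q - a • 1) * (Q - b • 1) = Q * Q - (a + b) • Q + (a * b) • 1 := by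
    intro a b
    simp only [sub_mul, mul_sub, smul_mul_assoc, mul_smul_comm, one_mul, mul_one, smul_smul]
    module
  have hQQ : Q * Q = (lam + mu) • Q - (lam * mu) • 1 := by
    have h := hQ2
    rw [expand] at h
    have := sub_eq_zero.mpr h.symm
    rw [← sub_eq_zero]
    rw [← h]
    module
  have hsq : (Q - lam • 1) * (Q - lam • 1) = (mu - lam) • (Q - lam • 1) := by
    rw [expand, hQQ]
    module
  have hE2 : E * E = E := by
    rw [hE, smul_mul_assoc, mul_smul_comm, smul_smul, hsq, smul_smul]
    rw [show (mu - lam)⁻¹ * (mu - lam)⁻¹ * (mu - lam) = (mu - lam)⁻¹ by field_simp]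
  -- E has trace 1
  have htrE : Matrix.trace E = 1 := by
    rw [hE, Matrix.trace_smul, Matrix.trace_sub, Matrix.trace_smul, Matrix.trace_one, htr]
    simp only [smul_eq_mul, Fintype.card_fin]
    field_simp
    ring
  -- range of E.mulVecLin is span of w
  set f := E.mulVecLin with hf
  have hproj : LinearMap.IsProj (LinearMap.range f) f := by
    constructor
    · intro x; exact LinearMap.mem_range_self f x
    · rintro x ⟨y, rfl⟩
      have : f (f y) = (E * E).mulVecLin y := by
        rw [Matrix.mulVecLin_mul]; rfl
      rw [this, hE2]
  have hfin : Module.finrank ℂ (LinearMap.range f) = 1 := by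
    have h1 : LinearMap.trace ℂ (Fin 3 → ℂ) f = (Module.finrank ℂ (LinearMap.range f) : ℂ) :=
      hproj.trace
    rw [← trace_mulVecLin', htrE] at h1
    exact_mod_cast h1.symm
  have hwE : E.mulVec w = w := by
    rw [hE, Matrix.smul_mulVec, Matrix.sub_mulVec, Matrix.smul_mulVec,
      Matrix.one_mulVec, hQw, ← sub_smul, smul_smul, inv_mul_cancel₀ hml, one_smul]
  have hwmem : w ∈ LinearMap.range f := ⟨w, hwE⟩
  have hrange : Submodule.span ℂ {w} = LinearMap.range f := by
    apply Submodule.eq_of_le_of_finrank_le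
    · rw [Submodule.span_le, Set.singleton_subset_iff]; exact hwmem
    · rw [hfin, finrank_span_singleton hw]
  have hEmem : ∀ x : Fin 3 → ℂ, E.mulVec x ∈ Submodule.span ℂ {w} := by
    intro x; rw [hrange]; exact ⟨x, rfl⟩
  -- key identity : Q.mulVec v = lam • v + (mu - lam) • E.mulVec v
  have hQv : ∀ v : Fin 3 → ℂ, Q.mulVec v = lam • v + (mu - lam) • E.mulVec v := by
    intro v
    rw [hE, Matrix.smul_mulVec, smul_smul,
      show (mu - lam) * (mu - lam)⁻¹ = 1 by field_simp, one_smul,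
      Matrix.sub_mulVec, Matrix.smul_mulVec, Matrix.one_mulVec]
    module
  set aw := A.mulVec w with haw
  obtain ⟨c, hc⟩ : ∃ c : ℂ, E.mulVec aw = c • w := by
    have h := hEmem aw
    rw [Submodule.mem_span_singleton] at h
    obtain ⟨c, hc⟩ := h
    exact ⟨c, hc.symm⟩
  have hQaw : Q.mulVec aw = lam • aw + ((mu - lam) * c) • w := by
    rw [hQv aw, hc, smul_smul]
  have hAQAw : A.mulVec (Q.mulVec aw) = (mu * mu) • w := by
    have h1 : (A * Q * A).mulVec w = (Q * Q).mulVec w := by rw [hrel]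
    rw [← Matrix.mulVec_mulVec, ← Matrix.mulVec_mulVec, ← Matrix.mulVec_mulVec] at h1
    rw [hQw, Matrix.mulVec_smul, hQw, smul_smul] at h1
    rw [← haw] at h1
    exact h1
  have hA2w : A.mulVec aw = lam⁻¹ • ((mu * mu) • w - ((mu - lam) * c) • aw) := by
    have h2 : A.mulVec (lam • aw + ((mu - lam) * c) • w) = (mu * mu) • w := by
      rw [← hQaw]; exact hAQAw
    rw [Matrix.mulVec_add, Matrix.mulVec_smul, Matrix.mulVec_smul, ← haw] at h2
    have h3 : lam • A.mulVec aw = (mu * mu) • w - ((mu - lam) * c) • aw := by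
      rw [← h2]; module
    calc A.mulVec aw = lam⁻¹ • (lam • A.mulVec aw) := by
          rw [smul_smul, inv_mul_cancel₀ hlam, one_smul]
      _ = lam⁻¹ • ((mu * mu) • w - ((mu - lam) * c) • aw) := by rw [h3]
  refine ⟨Submodule.span ℂ {w, aw}, ?_, ?_, ?_, ?_⟩
  · intro hbot
    apply hw
    have : w ∈ Submodule.span ℂ {w, aw} := Submodule.subset_span (by simp)
    rw [hbot] at this
    simpa using this
  · classical
    intro htop
    have hcard : ({w, aw} : Set (Fin 3 → ℂ)).toFinset.card < 3 := by
      rw [Set.toFinset_insert, Set.toFinset_singleton]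
      exact lt_of_le_of_lt (Finset.card_insert_le _ _) (by simp)
    have := span_lt_top_of_card_lt_finrank (R := ℂ) (s := ({w, aw} : Set (Fin 3 → ℂ)))
      (by rw [Module.finrank_pi]; simpa using hcard)
    exact absurd htop this.ne
  · -- A - invariance
    have hwU : w ∈ Submodule.span ℂ ({w, aw} : Set (Fin 3 → ℂ)) := Submodule.subset_span (by simp)
    have hawU : aw ∈ Submodule.span ℂ ({w, aw} : Set (Fin 3 → ℂ)) := Submodule.subset_span (by simp)
    intro x hx
    induction hx using Submodule.span_induction with
    | mem y hy =>
      rcases hy with rfl | rfl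
      · exact hawU
      · rw [hA2w]
        exact Submodule.smul_mem _ _ (Submodule.sub_mem _ (Submodule.smul_mem _ _ hwU)
          (Submodule.smul_mem _ _ hawU))
    | zero => rw [Matrix.mulVec_zero]; exact Submodule.zero_mem _
    | add y z _ _ hy hz => rw [Matrix.mulVec_add]; exact Submodule.add_mem _ hy hz
    | smul t y _ hy => rw [Matrix.mulVec_smul]; exact Submodule.smul_mem _ _ hy
  · -- Q - invariance
    have hwU : w ∈ Submodule.span ℂ ({w, aw} : Set (Fin 3 → ℂ)) := Submodule.subset_span (by simp)
    have hawU : aw ∈ Submodule.span ℂ ({w, aw} : Set (Fin 3 → ℂ)) := Submodule.subset_span (by simp)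
    intro x hx
    induction hx using Submodule.span_induction with
    | mem y hy =>
      rcases hy with rfl | rfl
      · rw [hQw]; exact Submodule.smul_mem _ _ hwU
      · rw [hQaw]
        exact Submodule.add_mem _ (Submodule.smul_mem _ _ hawU) (Submodule.smul_mem _ _ hwU)
    | zero => rw [Matrix.mulVec_zero]; exact Submodule.zero_mem _
    | add y z _ _ hy hz => rw [Matrix.mulVec_add]; exact Submodule.add_mem _ hy hz
    | smul t y _ hy => rw [Matrix.mulVec_smul]; exact Submodule.smul_mem _ _ hy

/-- evaluation of the characteristic polynomial -/
lemma eval_charpoly' (M : Matrix (Fin 3) (Fin 3) ℂ) (x : ℂ) :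
    (M.charpoly).eval x = (x • (1 : Matrix (Fin 3) (Fin 3) ℂ) - M).det := by
  rw [Matrix.charpoly, ← Polynomial.coe_evalRingHom, RingHom.map_det]
  congr 1
  ext i j
  by_cases h : i = j <;>
    simp [Matrix.charmatrix_apply, h, Matrix.one_apply, Matrix.smul_apply, Matrix.map_apply,
      Matrix.diagonal]

/-- a root of the characteristic polynomial has an eigenvector -/
lemma exists_eigenvector (M : Matrix (Fin 3) (Fin 3) ℂ) (r : ℂ)
    (hr : r ∈ M.charpoly.roots) : ∃ v, v ≠ 0 ∧ M.mulVec v = r • v := by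
  have hev : (M.charpoly).eval r = 0 := by
    have := Polynomial.isRoot_of_mem_roots hr
    exact this
  rw [eval_charpoly'] at hev
  have hdet : (M - r • (1 : Matrix (Fin 3) (Fin 3) ℂ)).det = 0 := by
    rw [show (M - r • 1) = -(r • (1 : Matrix (Fin 3) (Fin 3) ℂ) - M) from (neg_sub _ _).symm,
      Matrix.det_neg, hev, mul_zero]
  obtain ⟨v, hv0, hv⟩ := (Matrix.exists_mulVec_eq_zero_iff).2 hdet
  refine ⟨v, hv0, ?_⟩
  rw [Matrix.sub_mulVec, Matrix.smul_mulVec, Matrix.one_mulVec] at hv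
  have := sub_eq_zero.mp hv
  exact this

lemma triple_prod (Q : Matrix (Fin 3) (Fin 3) ℂ) (a b c : ℂ) :
    (Q - a • 1) * (Q - b • 1) * (Q - c • 1) =
      Q * Q * Q - (a + b + c) • (Q * Q) + (a * b + a * c + b * c) • Q - (a * b * c) • 1 := by
  simp only [sub_mul, mul_sub, smul_mul_assoc, mul_smul_comm, one_mul, mul_one, smul_smul]
  module

end aux

/-- for an irreducible 3-dimensional representation of `B₃` with `ρ(σ₁)`
diagonalizable with eigenvalues `α₁, α₂, α₃` and `ρ(Δ₃²) = z·I`, one has `z = (α₁α₂α₃)²`. -/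
theorem braid3_scalar_dim3 (ρ : BraidGroup 3 →* Matrix.GeneralLinearGroup (Fin 3) ℂ)
    (hirr : IsIrreducibleRep ρ) (α₁ α₂ α₃ : ℂ)
    (hdiag : ∃ C : Matrix.GeneralLinearGroup (Fin 3) ℂ,
      (ρ (braidGen 0) : Matrix (Fin 3) (Fin 3) ℂ) =
        (C : Matrix (Fin 3) (Fin 3) ℂ) * Matrix.diagonal ![α₁, α₂, α₃] *
          (C⁻¹ : Matrix (Fin 3) (Fin 3) ℂ))
    (z : ℂ)
    (hz : (ρ (deltaSq 3) : Matrix (Fin 3) (Fin 3) ℂ) = z • (1 : Matrix (Fin 3) (Fin 3) ℂ)) :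
    z = (α₁ * α₂ * α₃) ^ 2 := by
  -- the braid relation
  have hbraid : braidGen (n := 3) 0 * braidGen 1 * braidGen 0
      = braidGen 1 * braidGen 0 * braidGen 1 := by
    have hrel : (FreeGroup.of (0 : Fin 2) * FreeGroup.of (1 : Fin 2) * FreeGroup.of 0 *
        (FreeGroup.of 1 * FreeGroup.of 0 * FreeGroup.of 1)⁻¹) ∈ braidRels 2 :=
      Or.inl ⟨0, 1, rfl, rfl⟩
    have h1 : (PresentedGroup.mk (braidRels 2))
        (FreeGroup.of (0 : Fin 2) * FreeGroup.of 1 * FreeGroup.of 0 *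
          (FreeGroup.of 1 * FreeGroup.of 0 * FreeGroup.of 1)⁻¹) = 1 :=
      (QuotientGroup.eq_one_iff _).2 (Subgroup.subset_normalClosure hrel)
    rw [_root_.map_mul, map_inv, _root_.map_mul, _root_.map_mul, _root_.map_mul, _root_.map_mul, mul_inv_eq_one] at h1
    exact h1
  -- Δ² = (σ₁ σ₂)³
  have hdelta : deltaSq 3 = (braidGen (n := 3) 0 * braidGen 1) ^ 3 := by
    show ((List.ofFn (fun i : Fin 2 => braidGen (n := 3) i)).prod) ^ 3 = _
    rw [List.ofFn_succ, List.ofFn_succ, List.ofFn_zero, List.prod_cons, List.prod_cons,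
      List.prod_nil, mul_one]
    rfl
  set A : Matrix (Fin 3) (Fin 3) ℂ := (ρ (braidGen 0) : Matrix (Fin 3) (Fin 3) ℂ) with hA
  set B : Matrix (Fin 3) (Fin 3) ℂ := (ρ (braidGen 1) : Matrix (Fin 3) (Fin 3) ℂ) with hB
  set Q : Matrix (Fin 3) (Fin 3) ℂ := A * B with hQ
  have hABA : A * B * A = B * A * B := by
    have := congrArg (fun g => (ρ g : Matrix (Fin 3) (Fin 3) ℂ)) hbraid
    simpa only [_root_.map_mul, Units.val_mul] using this
  have hrelAQ : A * Q * A = Q * Q := by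
    have hABA' : A * (B * A) = B * (A * B) := by simpa [mul_assoc] using hABA
    simp only [hQ, mul_assoc, hABA']
  have hQ3 : Q * Q * Q = z • 1 := by
    have h1 : (ρ (deltaSq 3) : Matrix (Fin 3) (Fin 3) ℂ) = Q * Q * Q := by
      rw [hdelta, map_pow, Units.val_pow_eq_pow_val, _root_.map_mul, Units.val_mul]
      rw [← hA, ← hB, ← hQ, pow_succ, pow_succ, pow_one]
    rw [← h1, hz]
  -- determinants
  have hAunit : IsUnit A.det := by
    rw [hA]; exact (Matrix.isUnit_iff_isUnit_det _).1 (ρ (braidGen 0)).isUnit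
  have hBunit : IsUnit B.det := by
    rw [hB]; exact (Matrix.isUnit_iff_isUnit_det _).1 (ρ (braidGen 1)).isUnit
  have hAdet : A.det ≠ 0 := hAunit.ne_zero
  have hBdet : B.det ≠ 0 := hBunit.ne_zero
  have hdetA : A.det = α₁ * α₂ * α₃ := by
    obtain ⟨C, hC⟩ := hdiag
    have hCud : IsUnit (C : Matrix (Fin 3) (Fin 3) ℂ).det :=
      (Matrix.isUnit_iff_isUnit_det _).1 C.isUnit
    have h1 : ((C : Matrix (Fin 3) (Fin 3) ℂ) * (C⁻¹ : Matrix (Fin 3) (Fin 3) ℂ)) = 1 :=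
      Matrix.mul_nonsing_inv _ hCud
    have h2 : (C : Matrix (Fin 3) (Fin 3) ℂ).det * (C⁻¹ : Matrix (Fin 3) (Fin 3) ℂ).det = 1 := by
      rw [← Matrix.det_mul, h1, Matrix.det_one]
    rw [hC, Matrix.det_mul, Matrix.det_mul]
    rw [Matrix.det_diagonal]
    rw [Fin.prod_univ_three]
    simp only [Matrix.cons_val_zero, Matrix.cons_val_one, Matrix.head_cons,
      Matrix.cons_val_two, Matrix.tail_cons]
    linear_combination (α₁ * α₂ * α₃) * h2
  have hdetB : B.det = A.det := by
    have h := congrArg Matrix.det hABA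
    simp only [Matrix.det_mul] at h
    have h3 : (A.det * B.det) * B.det = (A.det * B.det) * A.det := by linear_combination -h
    exact mul_left_cancel₀ (mul_ne_zero hAdet hBdet) h3
  have hdetQ : Q.det = A.det * A.det := by rw [hQ, Matrix.det_mul, hdetB]
  -- z ≠ 0
  have hz3 : Q.det ^ 3 = z ^ 3 := by
    have := congrArg Matrix.det hQ3
    rw [Matrix.det_mul, Matrix.det_mul, Matrix.det_smul, Matrix.det_one] at this
    rw [pow_succ, pow_succ, pow_one, this]
    simp [Fintype.card_fin]
  have hzne : z ≠ 0 := by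
    intro h0
    rw [h0] at hz3
    simp only [ne_eq, zero_pow, OfNat.ofNat_ne_zero, not_false_eq_true] at hz3
    exact hAdet (by
      have := pow_eq_zero_iff (n := 3) (by norm_num) |>.mp hz3
      rw [hdetQ] at this
      rcases mul_eq_zero.mp this with h | h <;> exact h)
  -- goal reduction
  have hgoal : (α₁ * α₂ * α₃) ^ 2 = Q.det := by
    rw [hdetQ, hdetA]; ring
  rw [hgoal]
  -- characteristic polynomial of Q
  set p : Polynomial ℂ := Q.charpoly with hp
  have hmonic : p.Monic := Q.charpoly_monic
  have hpne : p ≠ 0 := hmonic.ne_zero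
  have hcard : Multiset.card p.roots = 3 := by
    have hsp : p.Splits := IsAlgClosed.splits p
    rw [(Polynomial.splits_iff_card_roots).1 hsp, hp, Matrix.charpoly_natDegree_eq_dim,
      Fintype.card_fin]
  obtain ⟨r₁, r₂, r₃, hroots⟩ := Multiset.card_eq_three.mp hcard
  have hprod : Q.det = r₁ * r₂ * r₃ := by
    rw [Matrix.det_eq_prod_roots_charpoly, ← hp, hroots]
    simp [Multiset.prod_cons]
    ring
  have htrQ : Q.trace = r₁ + r₂ + r₃ := by
    rw [Matrix.trace_eq_sum_roots_charpoly, ← hp, hroots]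
    simp [Multiset.sum_cons]
    ring
  -- each root is a cube root of z
  have hcube : ∀ r ∈ p.roots, r ^ 3 = z := by
    intro r hr
    obtain ⟨v, hv0, hv⟩ := exists_eigenvector Q r hr
    have h1 : (Q * Q * Q).mulVec v = (r ^ 3) • v := by
      have e1 : Q.mulVec (Q.mulVec (Q.mulVec v)) = (r ^ 3) • v := by
        simp only [hv, Matrix.mulVec_smul, smul_smul]
        rw [show r * r * r = r ^ 3 by ring]
      rw [← e1, Matrix.mulVec_mulVec, Matrix.mulVec_mulVec]
    rw [hQ3, Matrix.smul_mulVec, Matrix.one_mulVec] at h1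
    have h2 : (z - r ^ 3) • v = 0 := by rw [sub_smul, h1, sub_self]
    rcases smul_eq_zero.mp h2 with h | h
    · exact (sub_eq_zero.mp h).symm
    · exact absurd h hv0
  have hr₁ : r₁ ^ 3 = z := hcube r₁ (by rw [hroots]; simp)
  have hr₂ : r₂ ^ 3 = z := hcube r₂ (by rw [hroots]; simp)
  have hr₃ : r₃ ^ 3 = z := hcube r₃ (by rw [hroots]; simp)
  have hsp : p.Splits := IsAlgClosed.splits p
  -- upgrade invariance under A and Q to invariance under the whole group
  have hinv : ∀ U : Submodule ℂ (Fin 3 → ℂ),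
      (∀ x ∈ U, A.mulVec x ∈ U) → (∀ x ∈ U, Q.mulVec x ∈ U) → U = ⊥ ∨ U = ⊤ := by
    intro U hUA hUQ
    have Pinv : ∀ g : BraidGroup 3,
        (∀ x ∈ U, ((ρ g : Matrix (Fin 3) (Fin 3) ℂ)).mulVec x ∈ U) →
        (∀ x ∈ U, ((ρ g⁻¹ : Matrix (Fin 3) (Fin 3) ℂ)).mulVec x ∈ U) := by
      intro g hg
      set M : Matrix (Fin 3) (Fin 3) ℂ := (ρ g : Matrix (Fin 3) (Fin 3) ℂ) with hM
      set N : Matrix (Fin 3) (Fin 3) ℂ := (ρ g⁻¹ : Matrix (Fin 3) (Fin 3) ℂ) with hN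
      have hMN : M * N = 1 := by
        rw [hM, hN, ← Units.val_mul, ← _root_.map_mul, mul_inv_cancel, _root_.map_one, Units.val_one]
      have hNM : N * M = 1 := by
        rw [hM, hN, ← Units.val_mul, ← _root_.map_mul, inv_mul_cancel, _root_.map_one, Units.val_one]
      let e : (Fin 3 → ℂ) ≃ₗ[ℂ] (Fin 3 → ℂ) :=
        LinearEquiv.ofLinear M.mulVecLin N.mulVecLin
          (by rw [← Matrix.mulVecLin_mul, hMN, Matrix.mulVecLin_one])
          (by rw [← Matrix.mulVecLin_mul, hNM, Matrix.mulVecLin_one])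
      have hle : Submodule.map (e : (Fin 3 → ℂ) →ₗ[ℂ] (Fin 3 → ℂ)) U ≤ U := by
        rintro _ ⟨x, hx, rfl⟩
        exact hg x hx
      have heq : Submodule.map (e : (Fin 3 → ℂ) →ₗ[ℂ] (Fin 3 → ℂ)) U = U :=
        Submodule.eq_of_le_of_finrank_le hle (by rw [LinearEquiv.finrank_map_eq])
      intro x hx
      rw [← heq] at hx
      obtain ⟨y, hy, rfl⟩ := hx
      have : N.mulVec (M.mulVec y) = y := by
        rw [Matrix.mulVec_mulVec, hNM, Matrix.one_mulVec]
      show N.mulVec (M.mulVec y) ∈ U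
      rw [this]
      exact hy
    have key : ∀ g : BraidGroup 3, ∀ x ∈ U,
        ((ρ g : Matrix (Fin 3) (Fin 3) ℂ)).mulVec x ∈ U := by
      let S : Subgroup (BraidGroup 3) :=
        { carrier := {g | ∀ x ∈ U, ((ρ g : Matrix (Fin 3) (Fin 3) ℂ)).mulVec x ∈ U}
          one_mem' := by
            intro x hx
            rw [_root_.map_one, Units.val_one, Matrix.one_mulVec]
            exact hx
          mul_mem' := by
            intro a b ha hb x hx
            rw [_root_.map_mul, Units.val_mul, ← Matrix.mulVec_mulVec]
            exact ha _ (hb x hx)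
          inv_mem' := by
            intro a ha
            exact Pinv a ha }
      have hgen0 : braidGen (n := 3) 0 ∈ S := hUA
      have hgen01 : braidGen (n := 3) 0 * braidGen 1 ∈ S := by
        intro x hx
        rw [_root_.map_mul, Units.val_mul]
        exact hUQ x hx
      have hgen1 : braidGen (n := 3) 1 ∈ S := by
        have h : braidGen (n := 3) 1 = (braidGen 0)⁻¹ * (braidGen 0 * braidGen 1) := by group
        rw [h]
        exact S.mul_mem (S.inv_mem hgen0) hgen01
      intro g
      have hg : g ∈ S := by
        refine PresentedGroup.generated_by _ S ?_ g
        intro j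
        fin_cases j
        · exact hgen0
        · exact hgen1
      exact hg
    exact hirr U key
  -- contradiction in the repeated-root case
  have contra : ∀ lam mu : ℂ, lam ^ 3 = z → mu ^ 3 = z → lam ≠ mu →
      Q.trace = 2 * lam + mu → p.roots = {lam, lam, mu} → False := by
    intro lam mu hl3 hm3 hlmne htrc hrootseq
    have hlne0 : lam ≠ 0 := by
      intro h; apply hzne; rw [← hl3, h]; ring
    have hmne0 : mu ≠ 0 := by
      intro h; apply hzne; rw [← hm3, h]; ring
    have e : lam ^ 2 + lam * mu + mu ^ 2 = 0 := by
      have hfac : (lam - mu) * (lam ^ 2 + lam * mu + mu ^ 2) = 0 := by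
        linear_combination hl3 - hm3
      rcases mul_eq_zero.mp hfac with h | h
      · exact absurd (sub_eq_zero.mp h) hlmne
      · exact h
    set nu : ℂ := -(lam + mu) with hnu
    have hnulam : nu ≠ lam := by
      intro h
      have hh : 2 * lam + mu = 0 := by rw [hnu] at h; linear_combination -h
      have h3 : (3 : ℂ) * lam ^ 2 = 0 := by linear_combination e + (lam - mu) * hh
      have : lam ^ 2 = 0 := by linear_combination h3 / 3
      exact hlne0 (pow_eq_zero_iff (by norm_num) |>.mp this)
    have hnumu : nu ≠ mu := by
      intro h
      have hh : lam + 2 * mu = 0 := by rw [hnu] at h; linear_combination -h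
      have h3 : (3 : ℂ) * mu ^ 2 = 0 := by linear_combination e + (mu - lam) * hh
      have : mu ^ 2 = 0 := by linear_combination h3 / 3
      exact hmne0 (pow_eq_zero_iff (by norm_num) |>.mp this)
    have hevalnu : p.eval nu ≠ 0 := by
      have hpfac2 : p = (X - C lam) * ((X - C lam) * ((X - C mu) * 1)) := by
        conv_lhs => rw [hsp.eq_prod_roots_of_monic hmonic]
        rw [hrootseq]
        simp [Multiset.map_cons, Multiset.prod_cons]
      rw [hpfac2]
      simp only [Polynomial.eval_mul, Polynomial.eval_sub, Polynomial.eval_X,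
        Polynomial.eval_C, Polynomial.eval_one, mul_one]
      exact mul_ne_zero (sub_ne_zero.2 hnulam)
        (mul_ne_zero (sub_ne_zero.2 hnulam) (sub_ne_zero.2 hnumu))
    have hunit : IsUnit (Q - nu • 1) := by
      rw [Matrix.isUnit_iff_isUnit_det, isUnit_iff_ne_zero]
      intro h0
      apply hevalnu
      rw [eval_charpoly']
      rw [show (nu • (1 : Matrix (Fin 3) (Fin 3) ℂ) - Q) = -(Q - nu • 1) from (neg_sub _ _).symm,
        Matrix.det_neg, h0, mul_zero]
    have hs1 : lam + mu + nu = 0 := by rw [hnu]; ring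
    have hs2 : lam * mu + lam * nu + mu * nu = 0 := by rw [hnu]; linear_combination -e
    have hs3 : lam * mu * nu = z := by rw [hnu]; linear_combination (-lam) * e + hl3
    have hcube0 : (Q - lam • 1) * (Q - mu • 1) * (Q - nu • 1) = 0 := by
      rw [triple_prod, hQ3, hs1, hs2, hs3]
      simp
    have hQ2 : (Q - lam • 1) * (Q - mu • 1) = 0 := by
      obtain ⟨u, hu⟩ := hunit
      calc (Q - lam • 1) * (Q - mu • 1)
          = (Q - lam • 1) * (Q - mu • 1) * (↑u * ↑u⁻¹) := by rw [Units.mul_inv, mul_one]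
        _ = ((Q - lam • 1) * (Q - mu • 1) * (Q - nu • 1)) * ↑u⁻¹ := by rw [← mul_assoc, hu]
        _ = 0 := by rw [hcube0, zero_mul]
    have hmuroot : mu ∈ p.roots := by rw [hrootseq]; simp
    obtain ⟨w, hw0, hQw⟩ := exists_eigenvector Q mu hmuroot
    obtain ⟨U, hUbot, hUtop, hUA, hUQ⟩ :=
      core_invariant A Q lam mu hlne0 hlmne hrelAQ hQ2 htrc w hw0 hQw
    rcases hinv U hUA hUQ with h | h
    · exact hUbot h
    · exact hUtop h
  -- final case analysis on the roots
  have mswap2 : ∀ a b c : ℂ, ({a, b, c} : Multiset ℂ) = {a, c, b} := by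
    intro a b c
    change a ::ₘ b ::ₘ c ::ₘ 0 = a ::ₘ c ::ₘ b ::ₘ 0
    rw [Multiset.cons_swap b c]
  have mswap1 : ∀ a b c : ℂ, ({a, b, c} : Multiset ℂ) = {b, a, c} := by
    intro a b c
    change a ::ₘ b ::ₘ c ::ₘ 0 = b ::ₘ a ::ₘ c ::ₘ 0
    rw [Multiset.cons_swap a b]
  by_cases h12 : r₁ = r₂
  · by_cases h13 : r₁ = r₃
    · rw [hprod, ← h12, ← h13, ← hr₁]
      ring
    · exact (contra r₁ r₃ hr₁ hr₃ h13
        (by rw [htrQ, ← h12]; ring)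
        (by rw [hroots, ← h12])).elim
  · by_cases h13 : r₁ = r₃
    · exact (contra r₁ r₂ hr₁ hr₂ h12
        (by rw [htrQ, ← h13]; ring)
        (by rw [hroots, ← h13, mswap2])).elim
    · by_cases h23 : r₂ = r₃
      · exact (contra r₂ r₁ hr₂ hr₁ (Ne.symm h12)
          (by rw [htrQ, ← h23]; ring)
          (by rw [hroots, ← h23, mswap1, mswap2])).elim
      · -- all roots distinct
        have e12 : r₂ ^ 2 + r₂ * r₁ + r₁ ^ 2 = 0 := by
          have hfac : (r₂ - r₁) * (r₂ ^ 2 + r₂ * r₁ + r₁ ^ 2) = 0 := by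
            linear_combination hr₂ - hr₁
          rcases mul_eq_zero.mp hfac with h | h
          · exact absurd (sub_eq_zero.mp h).symm h12
          · exact h
        have e13 : r₃ ^ 2 + r₃ * r₁ + r₁ ^ 2 = 0 := by
          have hfac : (r₃ - r₁) * (r₃ ^ 2 + r₃ * r₁ + r₁ ^ 2) = 0 := by
            linear_combination hr₃ - hr₁
          rcases mul_eq_zero.mp hfac with h | h
          · exact absurd (sub_eq_zero.mp h).symm h13
          · exact h
        have hs : r₂ + r₃ + r₁ = 0 := by
          have hfac : (r₂ - r₃) * (r₂ + r₃ + r₁) = 0 := by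
            linear_combination e12 - e13
          rcases mul_eq_zero.mp hfac with h | h
          · exact absurd (sub_eq_zero.mp h) h23
          · exact h
        rw [hprod]
        linear_combination -hr₁ + r₁ * e12 - r₁ * r₂ * hs
end

section
/- Let X and Y be finite sets, μ ∈ Y, λ ∈ X, and γ ∈ ℂ. Let P be a complex matrix indexed by X × Y with P_{(α,β),(α′,β′)} = 0 unless β = β′ = μ, and let A and A′ be complex matrices indexed by X × Y with A_{(α,β),(α′,β′)} = 0 = A′_{(α,β),(α′,β′)} whenever α ≠ α′. Assume PAP = γP and PA′P = γP, that A and A′ have equal diagonal entries at (ν,μ) for every ν ∈ X with ν ≠ λ, and that there exists an index u with P_{u,(λ,μ)} · P_{(λ,μ),u} ≠ 0. Then A_{(λ,μ),(λ,μ)} = A′_{(λ,μ),(λ,μ)}. -/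
/-- the matrix content of Lemma 4.10 of the paper. If `P` is supported on
pairs with second coordinate `μ`, `A` and `A'` are block diagonal in the first coordinate,
`PAP = γP = PA'P`, `A` and `A'` have the same diagonal entries at `(ν,μ)` for `ν ≠ λ`, and
some entry product `P_{u,(λ,μ)}·P_{(λ,μ),u}` is nonzero, then `A` and `A'` also have the
same diagonal entry at `(λ,μ)`. -/
theorem projection_diagonal_entry (X Y : Type*) [Fintype X] [Fintype Y]
    [DecidableEq X] [DecidableEq Y] (μ : Y) (lam : X) (γ : ℂ)
    (P A A' : Matrix (X × Y) (X × Y) ℂ)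
    (hP : ∀ p p' : X × Y, ¬(p.2 = μ ∧ p'.2 = μ) → P p p' = 0)
    (hA : ∀ p p' : X × Y, p.1 ≠ p'.1 → A p p' = 0)
    (hA' : ∀ p p' : X × Y, p.1 ≠ p'.1 → A' p p' = 0)
    (h1 : P * A * P = γ • P) (h2 : P * A' * P = γ • P)
    (hdiag : ∀ ν : X, ν ≠ lam → A (ν, μ) (ν, μ) = A' (ν, μ) (ν, μ))
    (hu : ∃ u : X × Y, P u (lam, μ) * P (lam, μ) u ≠ 0) :
    A (lam, μ) (lam, μ) = A' (lam, μ) (lam, μ) := by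
  obtain ⟨u, hu⟩ := hu
  have key : ∀ B : Matrix (X × Y) (X × Y) ℂ, (∀ p p' : X × Y, p.1 ≠ p'.1 → B p p' = 0) →
      (P * B * P) u u = ∑ ν : X, P u (ν, μ) * B (ν, μ) (ν, μ) * P (ν, μ) u := by
    intro B hB
    rw [Matrix.mul_apply]
    have step : ∀ q : X × Y, (P * B) u q * P q u =
        (if q.2 = μ then P u q * B q q * P q u else 0) := by
      intro q
      by_cases hq : q.2 = μ
      · simp only [if_pos hq, Matrix.mul_apply, Finset.sum_mul]
        rw [Finset.sum_eq_single q]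
        · intro p _ hpq
          by_cases hp2 : p.2 = μ
          · have hne : p.1 ≠ q.1 := fun h => hpq (Prod.ext h (hp2.trans hq.symm))
            rw [hB p q hne, mul_zero, zero_mul]
          · rw [hP u p (by tauto), zero_mul, zero_mul]
        · intro h; exact absurd (Finset.mem_univ q) h
      · rw [if_neg hq, hP q u (by tauto), mul_zero]
    rw [Finset.sum_congr rfl (fun q _ => step q), Fintype.sum_prod_type]
    refine Finset.sum_congr rfl fun ν _ => ?_
    simp
  have e1 := key A hA
  have e2 := key A' hA'
  rw [h1] at e1
  rw [h2] at e2
  have hsum : ∑ ν : X, P u (ν, μ) * A (ν, μ) (ν, μ) * P (ν, μ) u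
      = ∑ ν : X, P u (ν, μ) * A' (ν, μ) (ν, μ) * P (ν, μ) u := e1.symm.trans e2
  have h0 : ∑ ν : X, P u (ν, μ) * (A (ν, μ) (ν, μ) - A' (ν, μ) (ν, μ)) * P (ν, μ) u = 0 := by
    simp only [mul_sub, sub_mul, Finset.sum_sub_distrib]
    rw [hsum, sub_self]
  rw [Finset.sum_eq_single lam (fun ν _ hν => by rw [hdiag ν hν, sub_self, mul_zero, zero_mul])
    (fun h => absurd (Finset.mem_univ lam) h)] at h0
  have h0' : (A (lam, μ) (lam, μ) - A' (lam, μ) (lam, μ)) * (P u (lam, μ) * P (lam, μ) u) = 0 := by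
    linear_combination h0
  rcases mul_eq_zero.1 h0' with h | h
  · exact sub_eq_zero.1 h
  · exact absurd h hu
end
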